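/- Six-fold symmetry (one instance): for positive integers w1, w2, w3 and y1, y2, y3 ∈ R, n ≥ 0: Σ_{k+l+m=n} (n choose k,l,m) · B_{k,q^{w2 w3}}(w1 y1) · B_{l,q^{w1 w3}}(w2 y2) · B_{m,q^{w1 w2}}(w3 y3) · w1^{l+m} · w2^{k+m} · w3^{k+l} = Σ_{k+l+m=n} (n choose k,l,m) · B_{k,q^{w1 w3}}(w2 y1) · B_{l,q^{w2 w3}}(w1 y2) · B_{m,q^{w1 w2}}(w3 y3) · w2^{l+m} · w1^{k+m} · w3^{k+l}. -/

import Mathlib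

open Finset PowerSeries Nat

/-- The q-analogue of power sums: `S_{k,q}(m) = Σ_{i=0}^m i^k q^i` (with `0^0 = 1`). -/
def qS {R : Type*} [CommRing R] (q : R) (k m : ℕ) : R :=
  ∑ i ∈ Finset.range (m + 1), (i : R) ^ k * q ^ i

/-- q-Bernoulli numbers `b_n(q, L)`: `(q-1) b_0 = L` and for `n ≥ 1`,
`(q-1) b_n = [n = 1] - q Σ_{k<n} C(n,k) b_k`. -/
noncomputable def qb {R : Type*} [CommRing R] (q L : R) : ℕ → R
  | 0 => Ring.inverse (q - 1) * L
  | n + 1 =>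
      Ring.inverse (q - 1) *
        ((if n + 1 = 1 then (1 : R) else 0) -
          q * ∑ k ∈ (Finset.range (n + 1)).attach,
              ((n + 1).choose k.1 : R) * qb q L k.1)
  termination_by n => n
  decreasing_by exact Finset.mem_range.mp k.2

/-- q-Bernoulli polynomials `B_{n,q}(x) = Σ_{k=0}^n C(n,k) b_k(q,L) x^{n-k}`. -/
noncomputable def qB {R : Type*} [CommRing R] (q L : R) (n : ℕ) (x : R) : R :=
  ∑ k ∈ Finset.range (n + 1), (n.choose k : R) * qb q L k * x ^ (n - k)


section Aux
variable {R : Type*} [CommRing R] [Algebra ℚ R]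

noncomputable def egf (a : ℕ → R) : PowerSeries R :=
  PowerSeries.mk fun n => algebraMap ℚ R ((n ! : ℚ)⁻¹) * a n

lemma coeff_egf (a : ℕ → R) (n : ℕ) :
    (PowerSeries.coeff (R := R) n) (egf a) = algebraMap ℚ R ((n ! : ℚ)⁻¹) * a n :=
  PowerSeries.coeff_mk _ _

lemma coeff_mul3 (f g h : PowerSeries R) (n : ℕ) :
    (PowerSeries.coeff (R := R) n) (f * g * h)
      = ∑ k ∈ range (n + 1), ∑ l ∈ range (n - k + 1),
          (PowerSeries.coeff (R := R) k) f * (PowerSeries.coeff (R := R) l) g *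
            (PowerSeries.coeff (R := R) (n - k - l)) h := by
  rw [mul_assoc, PowerSeries.coeff_mul, Finset.Nat.sum_antidiagonal_eq_sum_range_succ_mk]
  refine sum_congr rfl fun k hk => ?_
  rw [PowerSeries.coeff_mul, Finset.Nat.sum_antidiagonal_eq_sum_range_succ_mk, mul_sum]
  exact sum_congr rfl fun l hl => by ring

lemma fact_q (n k l : ℕ) (hk : k ≤ n) (hl : l ≤ n - k) :
    ((n.choose k : ℚ) * ((n - k).choose l : ℚ))
      = (n ! : ℚ) * ((k ! : ℚ)⁻¹ * ((l ! : ℚ)⁻¹ * ((n - k - l)! : ℚ)⁻¹)) := by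
  have h1 : ((n.choose k : ℚ) * k ! * (n - k)! = (n ! : ℚ)) := by
    exact_mod_cast congrArg (Nat.cast (R := ℚ)) (Nat.choose_mul_factorial_mul_factorial hk)
  have h2 : (((n - k).choose l : ℚ) * l ! * (n - k - l)! = ((n - k)! : ℚ)) := by
    exact_mod_cast congrArg (Nat.cast (R := ℚ)) (Nat.choose_mul_factorial_mul_factorial hl)
  have hk0 : (k ! : ℚ) ≠ 0 := by exact_mod_cast (Nat.factorial_ne_zero k)
  have hl0 : (l ! : ℚ) ≠ 0 := by exact_mod_cast (Nat.factorial_ne_zero l)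
  have hm0 : ((n - k - l)! : ℚ) ≠ 0 := by exact_mod_cast (Nat.factorial_ne_zero (n - k - l))
  field_simp
  rw [← h1, ← h2]; ring

lemma egf_mul3_sum (a b c : ℕ → R) (n : ℕ) :
    ∑ k ∈ range (n + 1), ∑ l ∈ range (n - k + 1),
        ((n.choose k : R) * ((n - k).choose l : R)) * a k * b l * c (n - k - l)
      = algebraMap ℚ R (n ! : ℚ) * (PowerSeries.coeff (R := R) n) (egf a * egf b * egf c) := by
  rw [coeff_mul3, mul_sum]
  refine sum_congr rfl fun k hk => ?_
  rw [mul_sum]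
  refine sum_congr rfl fun l hl => ?_
  rw [coeff_egf, coeff_egf, coeff_egf]
  have hk' : k ≤ n := Nat.lt_succ_iff.mp (mem_range.mp hk)
  have hl' : l ≤ n - k := Nat.lt_succ_iff.mp (mem_range.mp hl)
  have key : ((n.choose k : R) * ((n - k).choose l : R))
      = algebraMap ℚ R (n ! : ℚ) *
        (algebraMap ℚ R ((k ! : ℚ)⁻¹) * (algebraMap ℚ R ((l ! : ℚ)⁻¹) *
          algebraMap ℚ R (((n - k - l)! : ℚ)⁻¹))) := by
    rw [← map_mul, ← map_mul, ← map_mul, ← fact_q n k l hk' hl', map_mul,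
      map_natCast, map_natCast]
  rw [key]; ring

lemma egf_qB (q L : R) (u : ℕ) (x : R) :
    egf (fun k => ((u : R)) ^ k * qB (q ^ u) (((u : ℕ) : R) * L) k x)
      = egf (fun k => ((u : R)) ^ k * qb (q ^ u) (((u : ℕ) : R) * L) k) *
        egf (fun k => (((u : R)) * x) ^ k) := by
  ext n
  rw [PowerSeries.coeff_mul, Finset.Nat.sum_antidiagonal_eq_sum_range_succ_mk, coeff_egf]
  simp only [coeff_egf]
  rw [qB, mul_sum, mul_sum]
  refine sum_congr rfl fun k hk => ?_
  have hk' : k ≤ n := Nat.lt_succ_iff.mp (mem_range.mp hk)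
  have hpow : ((u : R)) ^ k * ((u : R)) ^ (n - k) = ((u : R)) ^ n := by
    rw [← pow_add, Nat.add_sub_cancel' hk']
  have key : algebraMap ℚ R ((n ! : ℚ)⁻¹) * (n.choose k : R)
      = algebraMap ℚ R ((k ! : ℚ)⁻¹) * algebraMap ℚ R (((n - k)! : ℚ)⁻¹) := by
    rw [← map_natCast (algebraMap ℚ R) (n.choose k), ← map_mul, ← map_mul]
    congr 1
    have h1 : ((n.choose k : ℚ) * k ! * (n - k)! = (n ! : ℚ)) := by
      exact_mod_cast congrArg (Nat.cast (R := ℚ)) (Nat.choose_mul_factorial_mul_factorial hk')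
    have hn0 : (n ! : ℚ) ≠ 0 := by exact_mod_cast (Nat.factorial_ne_zero n)
    have hk0 : (k ! : ℚ) ≠ 0 := by exact_mod_cast (Nat.factorial_ne_zero k)
    have hm0 : ((n - k)! : ℚ) ≠ 0 := by exact_mod_cast (Nat.factorial_ne_zero (n - k))
    field_simp
    rw [← h1]
  calc algebraMap ℚ R ((n ! : ℚ)⁻¹) * ((u : R) ^ n * ((n.choose k : R) * qb (q ^ u) (((u : ℕ) : R) * L) k * x ^ (n - k)))
      = (algebraMap ℚ R ((n ! : ℚ)⁻¹) * (n.choose k : R)) * (((u : R)) ^ k * ((u : R)) ^ (n - k)) * qb (q ^ u) (((u : ℕ) : R) * L) k * x ^ (n - k) := by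
        rw [hpow]; ring
    _ = algebraMap ℚ R ((k ! : ℚ)⁻¹) * ((u : R) ^ k * qb (q ^ u) (((u : ℕ) : R) * L) k) *
        (algebraMap ℚ R (((n - k)! : ℚ)⁻¹) * ((u : R) * x) ^ (n - k)) := by
        rw [key, mul_pow]; ring

end Aux

set_option maxHeartbeats 1000000 in
theorem symm_six_fold {R : Type*} [CommRing R] [Algebra ℚ R] (q L : R)
    (hq : ∀ w : ℕ, 0 < w → IsUnit (q ^ w - 1)) (w1 w2 w3 : ℕ) (hw1 : 0 < w1) (hw2 : 0 < w2) (hw3 : 0 < w3) (y1 y2 y3 : R) (n : ℕ) :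
    ∑ k ∈ Finset.range (n + 1), ∑ l ∈ Finset.range (n - k + 1),
        ((n.choose k : R) * ((n - k).choose l : R)) *
          qB (q ^ (w2 * w3)) (((w2 * w3 : ℕ) : R) * L) k ((w1 : R) * y1) *
          qB (q ^ (w1 * w3)) (((w1 * w3 : ℕ) : R) * L) l ((w2 : R) * y2) *
          qB (q ^ (w1 * w2)) (((w1 * w2 : ℕ) : R) * L) (n - k - l) ((w3 : R) * y3) *
          (w1 : R) ^ (l + (n - k - l)) * (w2 : R) ^ (k + (n - k - l)) * (w3 : R) ^ (k + l)
      = ∑ k ∈ Finset.range (n + 1), ∑ l ∈ Finset.range (n - k + 1),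
          ((n.choose k : R) * ((n - k).choose l : R)) *
            qB (q ^ (w1 * w3)) (((w1 * w3 : ℕ) : R) * L) k ((w2 : R) * y1) *
            qB (q ^ (w2 * w3)) (((w2 * w3 : ℕ) : R) * L) l ((w1 : R) * y2) *
            qB (q ^ (w1 * w2)) (((w1 * w2 : ℕ) : R) * L) (n - k - l) ((w3 : R) * y3) *
            (w2 : R) ^ (l + (n - k - l)) * (w1 : R) ^ (k + (n - k - l)) * (w3 : R) ^ (k + l) := by
  have prodeq :
      egf (fun k => ((w2 * w3 : ℕ) : R) ^ k * qB (q ^ (w2 * w3)) (((w2 * w3 : ℕ) : R) * L) k ((w1 : R) * y1)) *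
        egf (fun k => ((w1 * w3 : ℕ) : R) ^ k * qB (q ^ (w1 * w3)) (((w1 * w3 : ℕ) : R) * L) k ((w2 : R) * y2)) *
        egf (fun k => ((w1 * w2 : ℕ) : R) ^ k * qB (q ^ (w1 * w2)) (((w1 * w2 : ℕ) : R) * L) k ((w3 : R) * y3))
      = egf (fun k => ((w1 * w3 : ℕ) : R) ^ k * qB (q ^ (w1 * w3)) (((w1 * w3 : ℕ) : R) * L) k ((w2 : R) * y1)) *
        egf (fun k => ((w2 * w3 : ℕ) : R) ^ k * qB (q ^ (w2 * w3)) (((w2 * w3 : ℕ) : R) * L) k ((w1 : R) * y2)) *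
        egf (fun k => ((w1 * w2 : ℕ) : R) ^ k * qB (q ^ (w1 * w2)) (((w1 * w2 : ℕ) : R) * L) k ((w3 : R) * y3)) := by
    rw [egf_qB q L (w2 * w3) ((w1 : R) * y1), egf_qB q L (w1 * w3) ((w2 : R) * y2),
      egf_qB q L (w1 * w3) ((w2 : R) * y1), egf_qB q L (w2 * w3) ((w1 : R) * y2)]
    have e1 : ((w2 * w3 : ℕ) : R) * ((w1 : R) * y1) = ((w1 * w3 : ℕ) : R) * ((w2 : R) * y1) := by
      push_cast; ring
    have e2 : ((w1 * w3 : ℕ) : R) * ((w2 : R) * y2) = ((w2 * w3 : ℕ) : R) * ((w1 : R) * y2) := by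
      push_cast; ring
    rw [e1, e2]; ring
  calc
    ∑ k ∈ Finset.range (n + 1), ∑ l ∈ Finset.range (n - k + 1),
        ((n.choose k : R) * ((n - k).choose l : R)) *
          qB (q ^ (w2 * w3)) (((w2 * w3 : ℕ) : R) * L) k ((w1 : R) * y1) *
          qB (q ^ (w1 * w3)) (((w1 * w3 : ℕ) : R) * L) l ((w2 : R) * y2) *
          qB (q ^ (w1 * w2)) (((w1 * w2 : ℕ) : R) * L) (n - k - l) ((w3 : R) * y3) *
          (w1 : R) ^ (l + (n - k - l)) * (w2 : R) ^ (k + (n - k - l)) * (w3 : R) ^ (k + l)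
      = ∑ k ∈ Finset.range (n + 1), ∑ l ∈ Finset.range (n - k + 1),
          ((n.choose k : R) * ((n - k).choose l : R)) *
            (((w2 * w3 : ℕ) : R) ^ k * qB (q ^ (w2 * w3)) (((w2 * w3 : ℕ) : R) * L) k ((w1 : R) * y1)) *
            (((w1 * w3 : ℕ) : R) ^ l * qB (q ^ (w1 * w3)) (((w1 * w3 : ℕ) : R) * L) l ((w2 : R) * y2)) *
            (((w1 * w2 : ℕ) : R) ^ (n - k - l) * qB (q ^ (w1 * w2)) (((w1 * w2 : ℕ) : R) * L) (n - k - l) ((w3 : R) * y3)) := by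
        refine Finset.sum_congr rfl fun k hk => Finset.sum_congr rfl fun l hl => ?_
        push_cast
        ring
    _ = algebraMap ℚ R (n ! : ℚ) *
        (PowerSeries.coeff (R := R) n)
          (egf (fun k => ((w2 * w3 : ℕ) : R) ^ k * qB (q ^ (w2 * w3)) (((w2 * w3 : ℕ) : R) * L) k ((w1 : R) * y1)) *
           egf (fun k => ((w1 * w3 : ℕ) : R) ^ k * qB (q ^ (w1 * w3)) (((w1 * w3 : ℕ) : R) * L) k ((w2 : R) * y2)) *
           egf (fun k => ((w1 * w2 : ℕ) : R) ^ k * qB (q ^ (w1 * w2)) (((w1 * w2 : ℕ) : R) * L) k ((w3 : R) * y3))) :=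
        egf_mul3_sum (fun k => ((w2 * w3 : ℕ) : R) ^ k * qB (q ^ (w2 * w3)) (((w2 * w3 : ℕ) : R) * L) k ((w1 : R) * y1))
          (fun k => ((w1 * w3 : ℕ) : R) ^ k * qB (q ^ (w1 * w3)) (((w1 * w3 : ℕ) : R) * L) k ((w2 : R) * y2))
          (fun k => ((w1 * w2 : ℕ) : R) ^ k * qB (q ^ (w1 * w2)) (((w1 * w2 : ℕ) : R) * L) k ((w3 : R) * y3)) n
    _ = algebraMap ℚ R (n ! : ℚ) *
        (PowerSeries.coeff (R := R) n)
          (egf (fun k => ((w1 * w3 : ℕ) : R) ^ k * qB (q ^ (w1 * w3)) (((w1 * w3 : ℕ) : R) * L) k ((w2 : R) * y1)) *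
           egf (fun k => ((w2 * w3 : ℕ) : R) ^ k * qB (q ^ (w2 * w3)) (((w2 * w3 : ℕ) : R) * L) k ((w1 : R) * y2)) *
           egf (fun k => ((w1 * w2 : ℕ) : R) ^ k * qB (q ^ (w1 * w2)) (((w1 * w2 : ℕ) : R) * L) k ((w3 : R) * y3))) := by
        rw [prodeq]
    _ = ∑ k ∈ Finset.range (n + 1), ∑ l ∈ Finset.range (n - k + 1),
          ((n.choose k : R) * ((n - k).choose l : R)) *
            (((w1 * w3 : ℕ) : R) ^ k * qB (q ^ (w1 * w3)) (((w1 * w3 : ℕ) : R) * L) k ((w2 : R) * y1)) *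
            (((w2 * w3 : ℕ) : R) ^ l * qB (q ^ (w2 * w3)) (((w2 * w3 : ℕ) : R) * L) l ((w1 : R) * y2)) *
            (((w1 * w2 : ℕ) : R) ^ (n - k - l) * qB (q ^ (w1 * w2)) (((w1 * w2 : ℕ) : R) * L) (n - k - l) ((w3 : R) * y3)) :=
        (egf_mul3_sum (fun k => ((w1 * w3 : ℕ) : R) ^ k * qB (q ^ (w1 * w3)) (((w1 * w3 : ℕ) : R) * L) k ((w2 : R) * y1))
          (fun k => ((w2 * w3 : ℕ) : R) ^ k * qB (q ^ (w2 * w3)) (((w2 * w3 : ℕ) : R) * L) k ((w1 : R) * y2))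
          (fun k => ((w1 * w2 : ℕ) : R) ^ k * qB (q ^ (w1 * w2)) (((w1 * w2 : ℕ) : R) * L) k ((w3 : R) * y3)) n).symm
    _ = ∑ k ∈ Finset.range (n + 1), ∑ l ∈ Finset.range (n - k + 1),
          ((n.choose k : R) * ((n - k).choose l : R)) *
            qB (q ^ (w1 * w3)) (((w1 * w3 : ℕ) : R) * L) k ((w2 : R) * y1) *
            qB (q ^ (w2 * w3)) (((w2 * w3 : ℕ) : R) * L) l ((w1 : R) * y2) *
            qB (q ^ (w1 * w2)) (((w1 * w2 : ℕ) : R) * L) (n - k - l) ((w3 : R) * y3) *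
            (w2 : R) ^ (l + (n - k - l)) * (w1 : R) ^ (k + (n - k - l)) * (w3 : R) ^ (k + l) := by
        refine Finset.sum_congr rfl fun k hk => Finset.sum_congr rfl fun l hl => ?_
        push_cast
        ring
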